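/- Let f : Ω → ℂ, suppose f_k : Ω → ℂ is a sequence of harmonic maps on a planar domain Ω, each of which is an injective orientation-preserving map with positive Jacobian, converging locally uniformly to a harmonic map f. Then the derivative sequence (f_k)_z converges locally uniformly to f_z, the functions J(·, f_k) = |(f_k)_z|² − |(f_k)_z̄|² are positive, and either J(·, f) > 0 everywhere on Ω (so f is a local diffeomorphism) or J(·, f) ≡ 0 on Ω. -/

import Mathlib

open Complex MeasureTheory Real Filter
open scoped Classical Topology

/-- Wirtinger derivative ∂f/∂z. -/
noncomputable def wdz (f : ℂ → ℂ) (z : ℂ) : ℂ :=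
  (fderiv ℝ f z 1 - Complex.I * fderiv ℝ f z Complex.I) / 2

/-- Wirtinger derivative ∂f/∂z̄. -/
noncomputable def wdzbar (f : ℂ → ℂ) (z : ℂ) : ℂ :=
  (fderiv ℝ f z 1 + Complex.I * fderiv ℝ f z Complex.I) / 2

/-- Jacobian determinant J(z,f) = |f_z|² − |f_z̄|². -/
noncomputable def jac (f : ℂ → ℂ) (z : ℂ) : ℝ :=
  ‖wdz f z‖ ^ 2 - ‖wdzbar f z‖ ^ 2

open Metric intervalIntegral

lemma conj_eq_re_sub_im (v : ℂ) : (v.re : ℂ) - (v.im : ℂ) * Complex.I = (starRingEnd ℂ) v := by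
  apply Complex.ext <;> simp

lemma clm_apply_eq (L : ℂ →L[ℝ] ℂ) (v : ℂ) :
    L v = (v.re : ℂ) * L 1 + (v.im : ℂ) * L Complex.I := by
  have h : v = (v.re : ℝ) • (1 : ℂ) + (v.im : ℝ) • Complex.I := by
    simp [Complex.real_smul]
  calc L v = L ((v.re : ℝ) • (1 : ℂ) + (v.im : ℝ) • Complex.I) := by rw [← h]
    _ = (v.re : ℝ) • L 1 + (v.im : ℝ) • L Complex.I := by
        rw [map_add, L.map_smul, L.map_smul]
    _ = (v.re : ℂ) * L 1 + (v.im : ℂ) * L Complex.I := by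
        rw [Complex.real_smul, Complex.real_smul]

/-- directional derivative decomposition -/
lemma clm_apply_wirtinger (L : ℂ →L[ℝ] ℂ) (v : ℂ) :
    L v = (L 1 - Complex.I * L Complex.I) / 2 * v
        + (L 1 + Complex.I * L Complex.I) / 2 * (starRingEnd ℂ) v := by
  have key : ∀ x y a b : ℂ, x * a + y * b
      = (a - Complex.I * b) / 2 * (x + y * Complex.I)
      + (a + Complex.I * b) / 2 * (x - y * Complex.I) := by
    intro x y a b
    linear_combination (y * b) * Complex.I_mul_I
  calc L v = (v.re : ℂ) * L 1 + (v.im : ℂ) * L Complex.I := clm_apply_eq L v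
    _ = (L 1 - Complex.I * L Complex.I) / 2 * ((v.re : ℂ) + (v.im : ℂ) * Complex.I)
      + (L 1 + Complex.I * L Complex.I) / 2 * ((v.re : ℂ) - (v.im : ℂ) * Complex.I) :=
        key _ _ _ _
    _ = _ := by rw [Complex.re_add_im, conj_eq_re_sub_im]

lemma hasDerivAt_of_wdzbar_eq_zero {f : ℂ → ℂ} {z : ℂ}
    (hd : DifferentiableAt ℝ f z) (h0 : wdzbar f z = 0) :
    HasDerivAt f (wdz f z) z := by
  set L := fderiv ℝ f z with hL
  have h1 : L 1 + Complex.I * L Complex.I = 0 := by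
    have := h0; unfold wdzbar at this; field_simp at this; rw [mul_zero] at this; exact this
  have hLI : L Complex.I = Complex.I * L 1 := by
    have h2 : Complex.I * L Complex.I = - L 1 := by linear_combination h1
    calc L Complex.I = - (Complex.I * (Complex.I * L Complex.I)) := by
          rw [← mul_assoc, Complex.I_mul_I]; ring
      _ = Complex.I * L 1 := by rw [h2]; ring
  have hwdz : wdz f z = L 1 := by
    unfold wdz
    rw [← hL, hLI, ← mul_assoc, Complex.I_mul_I]
    ring
  rw [hwdz]
  have hF : HasFDerivAt f (ContinuousLinearMap.smulRight (1 : ℂ →L[ℂ] ℂ) (L 1)) z := by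
    apply hasFDerivAt_of_restrictScalars ℝ hd.hasFDerivAt
    ext v
    simp only [ContinuousLinearMap.coe_restrictScalars', ContinuousLinearMap.smulRight_apply,
      ContinuousLinearMap.one_apply]
    rw [clm_apply_eq L v, hLI, smul_eq_mul]
    have : v = (v.re : ℂ) + (v.im : ℂ) * Complex.I := (Complex.re_add_im v).symm
    calc v * L 1 = ((v.re : ℂ) + (v.im : ℂ) * Complex.I) * L 1 := by rw [← this]
      _ = (v.re : ℂ) * L 1 + (v.im : ℂ) * (Complex.I * L 1) := by ring
  simpa using hF.hasDerivAt

/-- conj ∘ f is holomorphic when wdz f = 0 -/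
lemma hasDerivAt_conj_of_wdz_eq_zero {f : ℂ → ℂ} {z : ℂ}
    (hd : DifferentiableAt ℝ f z) (h0 : wdz f z = 0) :
    HasDerivAt (fun w => (starRingEnd ℂ) (f w)) ((starRingEnd ℂ) (wdzbar f z)) z := by
  have hconj : DifferentiableAt ℝ (fun w => (starRingEnd ℂ) (f w)) z :=
    Complex.conjCLE.differentiableAt.comp z hd
  have hfd : fderiv ℝ (fun w => (starRingEnd ℂ) (f w)) z
      = (Complex.conjCLE : ℂ →L[ℝ] ℂ).comp (fderiv ℝ f z) := by
    have := (Complex.conjCLE.toContinuousLinearMap.hasFDerivAt.comp z hd.hasFDerivAt).fderiv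
    exact this
  have h1 : ∀ v : ℂ, fderiv ℝ (fun w => (starRingEnd ℂ) (f w)) z v
      = (starRingEnd ℂ) (fderiv ℝ f z v) := by
    intro v; rw [hfd]; rfl
  have hz : wdzbar (fun w => (starRingEnd ℂ) (f w)) z = (starRingEnd ℂ) (wdz f z) := by
    unfold wdzbar wdz
    rw [h1, h1]
    simp only [map_div₀, map_sub, map_mul, Complex.conj_I, map_ofNat]
    ring
  have hz' : wdz (fun w => (starRingEnd ℂ) (f w)) z = (starRingEnd ℂ) (wdzbar f z) := by
    unfold wdz wdzbar
    rw [h1, h1]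
    simp only [map_div₀, map_add, map_mul, Complex.conj_I, map_ofNat]
    ring
  have := hasDerivAt_of_wdzbar_eq_zero hconj (by rw [hz, h0, map_zero])
  rwa [hz'] at this

section two
variable {U : Set ℂ} {f : ℂ → ℂ}

lemma fderiv_c1 (hU : IsOpen U) (hf : ContDiffOn ℝ 2 f U) :
    ContDiffOn ℝ 1 (fderiv ℝ f) U := by
  have h2 : ContDiffOn ℝ ((1 : ℕ) + 1) f U := by
    exact_mod_cast hf
  exact ((contDiffOn_succ_iff_fderiv_of_isOpen hU).1 h2).2.2

lemma wdz_contDiffOn (hU : IsOpen U) (hf : ContDiffOn ℝ 2 f U) :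
    ContDiffOn ℝ 1 (wdz f) U := by
  have h1 : ContDiffOn ℝ 1 (fun z => fderiv ℝ f z 1) U :=
    (ContinuousLinearMap.apply ℝ ℂ (1:ℂ)).contDiff.comp_contDiffOn (fderiv_c1 hU hf)
  have h2 : ContDiffOn ℝ 1 (fun z => fderiv ℝ f z Complex.I) U :=
    (ContinuousLinearMap.apply ℝ ℂ (Complex.I)).contDiff.comp_contDiffOn (fderiv_c1 hU hf)
  exact ((h1.sub (h2.const_smul Complex.I)).div_const 2).congr (fun z hz => by
    simp [wdz, smul_eq_mul])

lemma wdzbar_contDiffOn (hU : IsOpen U) (hf : ContDiffOn ℝ 2 f U) :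
    ContDiffOn ℝ 1 (wdzbar f) U := by
  have h1 : ContDiffOn ℝ 1 (fun z => fderiv ℝ f z 1) U :=
    (ContinuousLinearMap.apply ℝ ℂ (1:ℂ)).contDiff.comp_contDiffOn (fderiv_c1 hU hf)
  have h2 : ContDiffOn ℝ 1 (fun z => fderiv ℝ f z Complex.I) U :=
    (ContinuousLinearMap.apply ℝ ℂ (Complex.I)).contDiff.comp_contDiffOn (fderiv_c1 hU hf)
  exact ((h1.add (h2.const_smul Complex.I)).div_const 2).congr (fun z hz => by
    simp [wdzbar, smul_eq_mul])

/-- symmetry of mixed Wirtinger derivatives -/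
lemma wdz_wdzbar_swap (hU : IsOpen U) (hf : ContDiffOn ℝ 2 f U) {z : ℂ} (hz : z ∈ U) :
    wdz (wdzbar f) z = wdzbar (wdz f) z := by
  have hdf : ∀ y ∈ U, DifferentiableAt ℝ f y := fun y hy =>
    (hf.contDiffAt (hU.mem_nhds hy)).differentiableAt two_ne_zero
  have hd2 : DifferentiableAt ℝ (fderiv ℝ f) z :=
    ((fderiv_c1 hU hf).contDiffAt (hU.mem_nhds hz)).differentiableAt one_ne_zero
  set S := fderiv ℝ (fderiv ℝ f) z with hS
  have hsymm : S 1 Complex.I = S Complex.I 1 :=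
    second_derivative_symmetric_of_eventually
      (by filter_upwards [hU.mem_nhds hz] with y hy using (hdf y hy).hasFDerivAt)
      hd2.hasFDerivAt 1 Complex.I
  have hA : ∀ c : ℂ, HasFDerivAt (fun w => fderiv ℝ f w c)
      ((ContinuousLinearMap.apply ℝ ℂ c).comp S) z := fun c =>
    (ContinuousLinearMap.apply ℝ ℂ c).hasFDerivAt.comp z hd2.hasFDerivAt
  have hwdz : HasFDerivAt (wdz f)
      ((2:ℂ)⁻¹ • (((ContinuousLinearMap.apply ℝ ℂ 1).comp S) -
        Complex.I • ((ContinuousLinearMap.apply ℝ ℂ Complex.I).comp S))) z := by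
    have h := (((hA 1).sub ((hA Complex.I).const_mul Complex.I)).const_mul ((2:ℂ)⁻¹))
    have hfun : (fun w => (2:ℂ)⁻¹ * (fderiv ℝ f w 1 - Complex.I * fderiv ℝ f w Complex.I))
        = wdz f := by
      funext w; rw [wdz]; ring
    rw [← hfun]
    exact h
  have hwdzbar : HasFDerivAt (wdzbar f)
      ((2:ℂ)⁻¹ • (((ContinuousLinearMap.apply ℝ ℂ 1).comp S) +
        Complex.I • ((ContinuousLinearMap.apply ℝ ℂ Complex.I).comp S))) z := by
    have h := (((hA 1).add ((hA Complex.I).const_mul Complex.I)).const_mul ((2:ℂ)⁻¹))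
    have hfun : (fun w => (2:ℂ)⁻¹ * (fderiv ℝ f w 1 + Complex.I * fderiv ℝ f w Complex.I))
        = wdzbar f := by
      funext w; rw [wdzbar]; ring
    rw [← hfun]
    exact h
  rw [wdz, wdzbar, hwdz.fderiv, hwdzbar.fderiv]
  simp only [ContinuousLinearMap.smul_apply, ContinuousLinearMap.sub_apply,
    ContinuousLinearMap.add_apply, ContinuousLinearMap.comp_apply,
    ContinuousLinearMap.apply_apply, smul_eq_mul]
  rw [hsymm]
  ring

/-- wdz f is holomorphic on U when f is C² and harmonic -/
lemma wdz_holo (hU : IsOpen U) (hf : ContDiffOn ℝ 2 f U)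
    (hh : ∀ z ∈ U, wdzbar (fun w => wdz f w) z = 0) :
    DifferentiableOn ℂ (wdz f) U := by
  intro z hz
  have hd : DifferentiableAt ℝ (wdz f) z :=
    ((wdz_contDiffOn hU hf).contDiffAt (hU.mem_nhds hz)).differentiableAt one_ne_zero
  exact (hasDerivAt_of_wdzbar_eq_zero hd (hh z hz)).differentiableAt.differentiableWithinAt

/-- z ↦ conj (wdzbar f z) is holomorphic on U when f is C² and harmonic -/
lemma wdzbar_conj_holo (hU : IsOpen U) (hf : ContDiffOn ℝ 2 f U)
    (hh : ∀ z ∈ U, wdzbar (fun w => wdz f w) z = 0) :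
    DifferentiableOn ℂ (fun z => (starRingEnd ℂ) (wdzbar f z)) U := by
  intro z hz
  have hd : DifferentiableAt ℝ (wdzbar f) z :=
    ((wdzbar_contDiffOn hU hf).contDiffAt (hU.mem_nhds hz)).differentiableAt one_ne_zero
  have h0 : wdz (wdzbar f) z = 0 := by
    rw [wdz_wdzbar_swap hU hf hz]
    exact hh z hz
  exact (hasDerivAt_conj_of_wdz_eq_zero hd h0).differentiableAt.differentiableWithinAt

end two

lemma interval_integral_conj {u : ℝ → ℂ} {a b : ℝ} :
    ∫ θ in a..b, (starRingEnd ℂ) (u θ) = (starRingEnd ℂ) (∫ θ in a..b, u θ) := by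
  simp [intervalIntegral, integral_conj, map_sub]

lemma integral_exp_neg_theta : ∫ θ in (0:ℝ)..(2*π), Complex.exp (-(θ * Complex.I)) = 0 := by
  have h : ∀ θ : ℝ, Complex.exp (-(θ * Complex.I)) = Complex.exp ((-Complex.I) * θ) := by
    intro θ; ring_nf
  rw [intervalIntegral.integral_congr (fun θ _ => h θ)]
  rw [integral_exp_mul_complex (by simp [Complex.I_ne_zero])]
  have : (-Complex.I) * (2*π : ℝ) = (-1 : ℤ) * (2 * π * Complex.I) := by push_cast; ring
  rw [this, Complex.exp_int_mul_two_pi_mul_I]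
  simp

lemma integral_exp_theta : ∫ θ in (0:ℝ)..(2*π), Complex.exp (θ * Complex.I) = 0 := by
  have h : ∀ θ : ℝ, Complex.exp (θ * Complex.I) = Complex.exp (Complex.I * θ) := by
    intro θ; ring_nf
  rw [intervalIntegral.integral_congr (fun θ _ => h θ)]
  rw [integral_exp_mul_complex Complex.I_ne_zero]
  have : Complex.I * (2*π : ℝ) = (1 : ℤ) * (2 * π * Complex.I) := by push_cast; ring
  rw [this, Complex.exp_int_mul_two_pi_mul_I]
  simp

/-- mean value property -/
lemma mean_value {U : Set ℂ} (hU : IsOpen U) {φ : ℂ → ℂ}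
    (hφ : DifferentiableOn ℂ φ U) {c : ℂ} {s : ℝ} (hs : 0 < s)
    (hsub : closedBall c s ⊆ U) :
    ∫ θ in (0:ℝ)..(2*π), φ (c + s * Complex.exp (θ * Complex.I)) = 2 * π * φ c := by
  have h := circleIntegral_sub_center_inv_smul_of_differentiable_on_off_countable hs
    Set.countable_empty (hφ.continuousOn.mono hsub)
    (fun z hz => hφ.differentiableAt (hU.mem_nhds (hsub (ball_subset_closedBall hz.1))))
  rw [circleIntegral] at h
  have hne : ∀ θ : ℝ, (s : ℂ) * Complex.exp (θ * Complex.I) ≠ 0 := by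
    intro θ
    exact mul_ne_zero (by exact_mod_cast hs.ne') (Complex.exp_ne_zero _)
  have heq : ∀ θ : ℝ, deriv (circleMap c s) θ •
      ((circleMap c s θ - c)⁻¹ • φ (circleMap c s θ))
      = Complex.I * φ (c + s * Complex.exp (θ * Complex.I)) := by
    intro θ
    rw [deriv_circleMap]
    simp only [circleMap, smul_eq_mul, zero_add, add_sub_cancel_left]
    rw [mul_comm, ← mul_assoc, mul_right_comm _ (φ _), inv_mul_cancel₀ (hne θ), one_mul, mul_comm]
  rw [intervalIntegral.integral_congr (fun θ _ => heq θ)] at h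
  rw [intervalIntegral.integral_const_mul] at h
  rw [smul_eq_mul] at h
  apply mul_left_cancel₀ Complex.I_ne_zero
  rw [h]; ring

/-- Cauchy–Goursat: ∮ (z−c)φ dz = 0 in parametrized form -/
lemma cauchy_vanish {U : Set ℂ} (hU : IsOpen U) {φ : ℂ → ℂ}
    (hφ : DifferentiableOn ℂ φ U) {c : ℂ} {s : ℝ} (hs : 0 < s)
    (hsub : closedBall c s ⊆ U) :
    ∫ θ in (0:ℝ)..(2*π), Complex.exp (θ * Complex.I) ^ 2
      * φ (c + s * Complex.exp (θ * Complex.I)) = 0 := by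
  have hcont : ContinuousOn (fun z => (z - c) * φ z) (closedBall c s) :=
    ((continuousOn_id.sub continuousOn_const).mul (hφ.continuousOn.mono hsub))
  have h := circleIntegral_eq_zero_of_differentiable_on_off_countable hs.le
    Set.countable_empty hcont
    (fun z hz => ((differentiableAt_id.sub_const c).mul
      (hφ.differentiableAt (hU.mem_nhds (hsub (ball_subset_closedBall hz.1))))))
  rw [circleIntegral] at h
  have heq : ∀ θ : ℝ, deriv (circleMap c s) θ •
      ((circleMap c s θ - c) * φ (circleMap c s θ))
      = (Complex.I * s^2) * (Complex.exp (θ * Complex.I) ^ 2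
          * φ (c + s * Complex.exp (θ * Complex.I))) := by
    intro θ
    rw [deriv_circleMap]
    simp only [circleMap, smul_eq_mul, zero_add, add_sub_cancel_left]
    ring
  rw [intervalIntegral.integral_congr (fun θ _ => heq θ),
    intervalIntegral.integral_const_mul] at h
  rcases mul_eq_zero.1 h with h' | h'
  · exact absurd h' (by
      simp [Complex.I_ne_zero, pow_eq_zero_iff, Complex.ofReal_eq_zero, hs.ne'])
  · exact h'
section key
variable {U : Set ℂ} {f : ℂ → ℂ}

lemma conj_exp_theta (θ : ℝ) :
    (starRingEnd ℂ) (Complex.exp (θ * Complex.I)) = Complex.exp (-(θ * Complex.I)) := by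
  rw [← Complex.exp_conj]; congr 1; simp

lemma exp_neg_mul_exp (θ : ℝ) :
    Complex.exp (-(θ * Complex.I)) * Complex.exp (θ * Complex.I) = 1 := by
  rw [← Complex.exp_add]; simp

lemma mem_cb {c : ℂ} {r : ℝ} (s θ : ℝ) (h0 : 0 ≤ s) (hsr : s ≤ r) :
    c + s * Complex.exp (θ * Complex.I) ∈ Metric.closedBall c r := by
  rw [Metric.mem_closedBall, dist_eq_norm, add_sub_cancel_left, norm_mul,
    Complex.norm_real, Complex.norm_exp_ofReal_mul_I]
  rw [Real.norm_eq_abs, _root_.abs_of_nonneg h0]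
  simpa using hsr

lemma line_continuous (c : ℂ) (eθ : ℂ) : Continuous (fun s : ℝ => c + s * eθ) := by
  continuity

/-- radial FTC decomposition -/
lemma radial_ftc (hU : IsOpen U) (hf : ContDiffOn ℝ 2 f U)
    {c : ℂ} {r : ℝ} (hr : 0 < r) (hsub : Metric.closedBall c r ⊆ U) (θ : ℝ) :
    f (c + r * Complex.exp (θ * Complex.I)) - f c
      = ∫ s in (0:ℝ)..r,
          (wdz f (c + s * Complex.exp (θ * Complex.I)) * Complex.exp (θ * Complex.I)
           + wdzbar f (c + s * Complex.exp (θ * Complex.I)) * Complex.exp (-(θ * Complex.I))) := by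
  set eθ : ℂ := Complex.exp (θ * Complex.I) with heθ
  have hmem : ∀ s : ℝ, s ∈ Set.uIcc (0:ℝ) r → c + s * eθ ∈ U := by
    intro s hs
    rw [Set.uIcc_of_le hr.le] at hs
    exact hsub (mem_cb s θ hs.1 hs.2)
  have hderiv : ∀ s ∈ Set.uIcc (0:ℝ) r,
      HasDerivAt (fun t : ℝ => f (c + t * eθ))
        (wdz f (c + s * eθ) * eθ + wdzbar f (c + s * eθ) * Complex.exp (-(θ * Complex.I))) s := by
    intro s hs
    have hzU : c + s * eθ ∈ U := hmem s hs
    have hdz : DifferentiableAt ℝ f (c + s * eθ) :=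
      (hf.contDiffAt (hU.mem_nhds hzU)).differentiableAt two_ne_zero
    have hγ : HasDerivAt (fun t : ℝ => c + (t : ℂ) * eθ) eθ s := by
      have h1 : HasDerivAt (fun t : ℝ => (t : ℂ)) 1 s := by
        simpa using (hasDerivAt_id s).ofReal_comp
      simpa using (h1.mul_const eθ).const_add c
    have hcomp := hdz.hasFDerivAt.comp_hasDerivAt s hγ
    have hval : fderiv ℝ f (c + s * eθ) eθ
        = wdz f (c + s * eθ) * eθ + wdzbar f (c + s * eθ) * Complex.exp (-(θ * Complex.I)) := by
      rw [clm_apply_wirtinger (fderiv ℝ f (c + s * eθ)) eθ]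
      rw [wdz, wdzbar, heθ, conj_exp_theta]
    rwa [hval] at hcomp
  have hint : IntervalIntegrable
      (fun s : ℝ => wdz f (c + s * eθ) * eθ
        + wdzbar f (c + s * eθ) * Complex.exp (-(θ * Complex.I))) volume 0 r := by
    apply ContinuousOn.intervalIntegrable
    have hmap : Set.MapsTo (fun s : ℝ => c + s * eθ) (Set.uIcc (0:ℝ) r) U := hmem
    exact (((wdz_contDiffOn hU hf).continuousOn.comp
        (line_continuous c eθ).continuousOn hmap).mul continuousOn_const).add
      (((wdzbar_contDiffOn hU hf).continuousOn.comp
        (line_continuous c eθ).continuousOn hmap).mul continuousOn_const)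
  have := intervalIntegral.integral_eq_sub_of_hasDerivAt hderiv hint
  rw [this]
  norm_num

end key
section keymain
variable {U : Set ℂ} {f : ℂ → ℂ}

lemma cont_exp_theta : Continuous (fun θ : ℝ => Complex.exp (θ * Complex.I)) :=
  Complex.continuous_exp.comp (Complex.continuous_ofReal.mul continuous_const)

lemma cont_exp_neg_theta : Continuous (fun θ : ℝ => Complex.exp (-(θ * Complex.I))) :=
  Complex.continuous_exp.comp (Complex.continuous_ofReal.mul continuous_const).neg

lemma cont_exp_neg_sq : Continuous (fun θ : ℝ => Complex.exp (-(θ * Complex.I)) ^ 2) :=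
  cont_exp_neg_theta.pow 2

lemma cont_exp_sq : Continuous (fun θ : ℝ => Complex.exp (θ * Complex.I) ^ 2) :=
  cont_exp_theta.pow 2

lemma cont_circle (c : ℂ) (s : ℝ) :
    Continuous (fun θ : ℝ => c + s * Complex.exp (θ * Complex.I)) :=
  continuous_const.add (continuous_const.mul cont_exp_theta)

lemma cont_exp_neg_sq2 : Continuous (fun p : ℝ × ℝ => Complex.exp (-(p.1 * Complex.I)) ^ 2) :=
  (Complex.continuous_exp.comp
    ((Complex.continuous_ofReal.comp continuous_fst).mul continuous_const).neg).pow 2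

set_option maxHeartbeats 1000000 in
lemma key1 (hU : IsOpen U) (hf : ContDiffOn ℝ 2 f U)
    (hh : ∀ z ∈ U, wdzbar (fun w => wdz f w) z = 0)
    {c : ℂ} {r : ℝ} (hr : 0 < r) (hsub : Metric.closedBall c r ⊆ U) :
    ∫ θ in (0:ℝ)..(2*π),
        Complex.exp (-(θ * Complex.I)) * f (c + r * Complex.exp (θ * Complex.I))
      = 2 * π * r * wdz f c := by
  have h2π : (0:ℝ) ≤ 2 * π := by positivity
  have hg : DifferentiableOn ℂ (wdz f) U := wdz_holo hU hf hh
  have hH : DifferentiableOn ℂ (fun z => (starRingEnd ℂ) (wdzbar f z)) U :=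
    wdzbar_conj_holo hU hf hh
  have hgc : ContinuousOn (wdz f) U := (wdz_contDiffOn hU hf).continuousOn
  have hhc : ContinuousOn (wdzbar f) U := (wdzbar_contDiffOn hU hf).continuousOn
  have hfc : ContinuousOn f U := hf.continuousOn
  -- the two-variable integrand
  set Y : ℝ → ℝ → ℂ := fun θ s =>
    wdz f (c + s * Complex.exp (θ * Complex.I))
      + Complex.exp (-(θ * Complex.I)) ^ 2 * wdzbar f (c + s * Complex.exp (θ * Complex.I))
    with hY
  -- continuity of the full map
  have hmap2 : ∀ p : ℝ × ℝ, p.2 ∈ Set.Icc (0:ℝ) r →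
      c + p.2 * Complex.exp (p.1 * Complex.I) ∈ U := by
    intro p hp
    exact hsub (mem_cb p.2 p.1 hp.1 hp.2)
  have hcont2 : Continuous (fun p : ℝ × ℝ => c + p.2 * Complex.exp (p.1 * Complex.I)) := by
    apply continuous_const.add
    exact (Complex.continuous_ofReal.comp continuous_snd).mul
      (Complex.continuous_exp.comp ((Complex.continuous_ofReal.comp continuous_fst).mul
        continuous_const))
  -- integrability of the original integrand and the constant part
  have hexpc := cont_exp_neg_theta
  have horig : IntervalIntegrable (fun θ : ℝ =>
      Complex.exp (-(θ * Complex.I)) * f (c + r * Complex.exp (θ * Complex.I)))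
      volume 0 (2*π) := by
    apply ContinuousOn.intervalIntegrable
    apply ContinuousOn.mul hexpc.continuousOn
    exact hfc.comp (cont_circle c r).continuousOn (fun θ _ => hsub (mem_cb r θ hr.le le_rfl))
  have hA : IntervalIntegrable (fun θ : ℝ => Complex.exp (-(θ * Complex.I)) * f c)
      volume 0 (2*π) := (hexpc.mul continuous_const).intervalIntegrable _ _
  -- split off the constant part
  have hsplit : ∫ θ in (0:ℝ)..(2*π),
      Complex.exp (-(θ * Complex.I)) * f (c + r * Complex.exp (θ * Complex.I))
      = (∫ θ in (0:ℝ)..(2*π), Complex.exp (-(θ * Complex.I)) * f c)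
        + ∫ θ in (0:ℝ)..(2*π),
            Complex.exp (-(θ * Complex.I)) * (f (c + r * Complex.exp (θ * Complex.I)) - f c) := by
    have h1 : (∫ θ in (0:ℝ)..(2*π),
        Complex.exp (-(θ * Complex.I)) * (f (c + r * Complex.exp (θ * Complex.I)) - f c))
        = (∫ θ in (0:ℝ)..(2*π),
            Complex.exp (-(θ * Complex.I)) * f (c + r * Complex.exp (θ * Complex.I)))
          - ∫ θ in (0:ℝ)..(2*π), Complex.exp (-(θ * Complex.I)) * f c := by
      rw [← intervalIntegral.integral_sub horig hA]
      apply intervalIntegral.integral_congr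
      intro θ _
      simp only
      ring
    rw [h1]
    ring
  have hAzero : (∫ θ in (0:ℝ)..(2*π), Complex.exp (-(θ * Complex.I)) * f c) = 0 := by
    rw [intervalIntegral.integral_mul_const, integral_exp_neg_theta, zero_mul]
  -- rewrite the second term via the radial FTC and push the factor inside
  have hBeq : ∀ θ ∈ Set.uIcc (0:ℝ) (2*π),
      Complex.exp (-(θ * Complex.I)) * (f (c + r * Complex.exp (θ * Complex.I)) - f c)
        = ∫ s in (0:ℝ)..r, Y θ s := by
    intro θ _
    rw [radial_ftc hU hf hr hsub θ, ← intervalIntegral.integral_const_mul]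
    apply intervalIntegral.integral_congr
    intro s _
    simp only [hY]
    have h1 := exp_neg_mul_exp θ
    linear_combination (wdz f (c + s * Complex.exp (θ * Complex.I))) * h1
  -- continuity of the 2-variable integrand
  have hYcont : ContinuousOn (Function.uncurry Y) (Set.Icc (0:ℝ) (2*π) ×ˢ Set.Icc (0:ℝ) r) := by
    have hmap : Set.MapsTo (fun p : ℝ × ℝ => c + p.2 * Complex.exp (p.1 * Complex.I))
        (Set.Icc (0:ℝ) (2*π) ×ˢ Set.Icc (0:ℝ) r) U := by
      intro p hp
      exact hmap2 p hp.2
    have h1 : ContinuousOn (fun p : ℝ × ℝ =>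
        wdz f (c + p.2 * Complex.exp (p.1 * Complex.I)))
        (Set.Icc (0:ℝ) (2*π) ×ˢ Set.Icc (0:ℝ) r) :=
      hgc.comp hcont2.continuousOn hmap
    have h2 : ContinuousOn (fun p : ℝ × ℝ =>
        Complex.exp (-(p.1 * Complex.I)) ^ 2
          * wdzbar f (c + p.2 * Complex.exp (p.1 * Complex.I)))
        (Set.Icc (0:ℝ) (2*π) ×ˢ Set.Icc (0:ℝ) r) := by
      exact cont_exp_neg_sq2.continuousOn.mul (hhc.comp hcont2.continuousOn hmap)
    exact h1.add h2
  -- Fubini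
  have hInt : MeasureTheory.Integrable (Function.uncurry Y)
      ((volume.restrict (Set.Ioc (0:ℝ) (2*π))).prod (volume.restrict (Set.Ioc (0:ℝ) r))) := by
    rw [MeasureTheory.Measure.prod_restrict, ← MeasureTheory.Measure.volume_eq_prod]
    exact (hYcont.integrableOn_compact (isCompact_Icc.prod isCompact_Icc)).mono_set
      (Set.prod_mono Set.Ioc_subset_Icc_self Set.Ioc_subset_Icc_self)
  have hswap := MeasureTheory.integral_integral_swap hInt
  -- inner integral evaluation
  have hinner : ∀ s ∈ Set.Ioc (0:ℝ) r,
      (∫ θ in Set.Ioc (0:ℝ) (2*π), Y θ s) = 2 * π * wdz f c := by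
    intro s hs
    have hsubs : Metric.closedBall c s ⊆ U :=
      subset_trans (Metric.closedBall_subset_closedBall hs.2) hsub
    have hptU : ∀ θ : ℝ, c + s * Complex.exp (θ * Complex.I) ∈ U := fun θ =>
      hsub (mem_cb s θ hs.1.le hs.2)
    have i1 : IntervalIntegrable (fun θ : ℝ =>
        wdz f (c + s * Complex.exp (θ * Complex.I))) volume 0 (2*π) := by
      apply ContinuousOn.intervalIntegrable
      exact hgc.comp (cont_circle c s).continuousOn (fun θ _ => hptU θ)
    have i2 : IntervalIntegrable (fun θ : ℝ =>
        Complex.exp (-(θ * Complex.I)) ^ 2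
          * wdzbar f (c + s * Complex.exp (θ * Complex.I))) volume 0 (2*π) := by
      apply ContinuousOn.intervalIntegrable
      exact cont_exp_neg_sq.continuousOn.mul
        (hhc.comp (cont_circle c s).continuousOn (fun θ _ => hptU θ))
    rw [← intervalIntegral.integral_of_le h2π]
    simp only [hY]
    rw [intervalIntegral.integral_add i1 i2]
    have hm := mean_value hU hg hs.1 hsubs
    have hcpt : ∀ θ : ℝ,
        Complex.exp (-(θ * Complex.I)) ^ 2
            * wdzbar f (c + s * Complex.exp (θ * Complex.I))
          = (starRingEnd ℂ) (Complex.exp (θ * Complex.I) ^ 2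
            * (starRingEnd ℂ) (wdzbar f (c + s * Complex.exp (θ * Complex.I)))) := by
      intro θ
      rw [map_mul, map_pow, conj_exp_theta, Complex.conj_conj]
    have hv : (∫ θ in (0:ℝ)..(2*π),
        Complex.exp (-(θ * Complex.I)) ^ 2
          * wdzbar f (c + s * Complex.exp (θ * Complex.I))) = 0 := by
      rw [intervalIntegral.integral_congr (fun θ _ => hcpt θ), interval_integral_conj,
        cauchy_vanish hU hH hs.1 hsubs, map_zero]
    rw [hm, hv, add_zero]
  -- assemble
  rw [hsplit, hAzero, zero_add, intervalIntegral.integral_congr hBeq]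
  rw [intervalIntegral.integral_of_le h2π]
  have hio : ∀ θ : ℝ, (∫ s in (0:ℝ)..r, Y θ s) = ∫ s in Set.Ioc (0:ℝ) r, Y θ s := fun θ =>
    intervalIntegral.integral_of_le hr.le
  rw [MeasureTheory.setIntegral_congr_fun measurableSet_Ioc
    (fun θ _ => hio θ)]
  rw [hswap]
  rw [MeasureTheory.setIntegral_congr_fun measurableSet_Ioc hinner]
  rw [MeasureTheory.setIntegral_const, MeasureTheory.measureReal_def, Real.volume_Ioc]
  rw [ENNReal.toReal_ofReal (by linarith : (0:ℝ) ≤ r - 0)]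
  rw [Complex.real_smul]
  push_cast
  ring

end keymain
section keymain2
variable {U : Set ℂ} {f : ℂ → ℂ}

set_option maxHeartbeats 1000000 in
lemma key2 (hU : IsOpen U) (hf : ContDiffOn ℝ 2 f U)
    (hh : ∀ z ∈ U, wdzbar (fun w => wdz f w) z = 0)
    {c : ℂ} {r : ℝ} (hr : 0 < r) (hsub : Metric.closedBall c r ⊆ U) :
    ∫ θ in (0:ℝ)..(2*π),
        Complex.exp (θ * Complex.I) * f (c + r * Complex.exp (θ * Complex.I))
      = 2 * π * r * wdzbar f c := by
  have h2π : (0:ℝ) ≤ 2 * π := by positivity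
  have hg : DifferentiableOn ℂ (wdz f) U := wdz_holo hU hf hh
  have hH : DifferentiableOn ℂ (fun z => (starRingEnd ℂ) (wdzbar f z)) U :=
    wdzbar_conj_holo hU hf hh
  have hgc : ContinuousOn (wdz f) U := (wdz_contDiffOn hU hf).continuousOn
  have hhc : ContinuousOn (wdzbar f) U := (wdzbar_contDiffOn hU hf).continuousOn
  have hfc : ContinuousOn f U := hf.continuousOn
  set Y : ℝ → ℝ → ℂ := fun θ s =>
    Complex.exp (θ * Complex.I) ^ 2 * wdz f (c + s * Complex.exp (θ * Complex.I))
      + wdzbar f (c + s * Complex.exp (θ * Complex.I))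
    with hY
  have hmap2 : ∀ p : ℝ × ℝ, p.2 ∈ Set.Icc (0:ℝ) r →
      c + p.2 * Complex.exp (p.1 * Complex.I) ∈ U := by
    intro p hp
    exact hsub (mem_cb p.2 p.1 hp.1 hp.2)
  have hcont2 : Continuous (fun p : ℝ × ℝ => c + p.2 * Complex.exp (p.1 * Complex.I)) := by
    apply continuous_const.add
    exact (Complex.continuous_ofReal.comp continuous_snd).mul
      (Complex.continuous_exp.comp ((Complex.continuous_ofReal.comp continuous_fst).mul
        continuous_const))
  have hexpc := cont_exp_theta
  have horig : IntervalIntegrable (fun θ : ℝ =>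
      Complex.exp (θ * Complex.I) * f (c + r * Complex.exp (θ * Complex.I)))
      volume 0 (2*π) := by
    apply ContinuousOn.intervalIntegrable
    apply ContinuousOn.mul hexpc.continuousOn
    exact hfc.comp (cont_circle c r).continuousOn (fun θ _ => hsub (mem_cb r θ hr.le le_rfl))
  have hA : IntervalIntegrable (fun θ : ℝ => Complex.exp (θ * Complex.I) * f c)
      volume 0 (2*π) := (hexpc.mul continuous_const).intervalIntegrable _ _
  have hsplit : ∫ θ in (0:ℝ)..(2*π),
      Complex.exp (θ * Complex.I) * f (c + r * Complex.exp (θ * Complex.I))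
      = (∫ θ in (0:ℝ)..(2*π), Complex.exp (θ * Complex.I) * f c)
        + ∫ θ in (0:ℝ)..(2*π),
            Complex.exp (θ * Complex.I) * (f (c + r * Complex.exp (θ * Complex.I)) - f c) := by
    have h1 : (∫ θ in (0:ℝ)..(2*π),
        Complex.exp (θ * Complex.I) * (f (c + r * Complex.exp (θ * Complex.I)) - f c))
        = (∫ θ in (0:ℝ)..(2*π),
            Complex.exp (θ * Complex.I) * f (c + r * Complex.exp (θ * Complex.I)))
          - ∫ θ in (0:ℝ)..(2*π), Complex.exp (θ * Complex.I) * f c := by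
      rw [← intervalIntegral.integral_sub horig hA]
      apply intervalIntegral.integral_congr
      intro θ _
      simp only
      ring
    rw [h1]
    ring
  have hAzero : (∫ θ in (0:ℝ)..(2*π), Complex.exp (θ * Complex.I) * f c) = 0 := by
    rw [intervalIntegral.integral_mul_const, integral_exp_theta, zero_mul]
  have hBeq : ∀ θ ∈ Set.uIcc (0:ℝ) (2*π),
      Complex.exp (θ * Complex.I) * (f (c + r * Complex.exp (θ * Complex.I)) - f c)
        = ∫ s in (0:ℝ)..r, Y θ s := by
    intro θ _
    rw [radial_ftc hU hf hr hsub θ, ← intervalIntegral.integral_const_mul]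
    apply intervalIntegral.integral_congr
    intro s _
    simp only [hY]
    have h1 := exp_neg_mul_exp θ
    linear_combination (wdzbar f (c + s * Complex.exp (θ * Complex.I))) * h1
  have hYcont : ContinuousOn (Function.uncurry Y) (Set.Icc (0:ℝ) (2*π) ×ˢ Set.Icc (0:ℝ) r) := by
    have hmap : Set.MapsTo (fun p : ℝ × ℝ => c + p.2 * Complex.exp (p.1 * Complex.I))
        (Set.Icc (0:ℝ) (2*π) ×ˢ Set.Icc (0:ℝ) r) U := by
      intro p hp
      exact hmap2 p hp.2
    have h2 : ContinuousOn (fun p : ℝ × ℝ =>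
        Complex.exp (p.1 * Complex.I) ^ 2
          * wdz f (c + p.2 * Complex.exp (p.1 * Complex.I)))
        (Set.Icc (0:ℝ) (2*π) ×ˢ Set.Icc (0:ℝ) r) := by
      apply ContinuousOn.mul
      · exact ((Complex.continuous_exp.comp
          ((Complex.continuous_ofReal.comp continuous_fst).mul continuous_const)).pow
            2).continuousOn
      · exact hgc.comp hcont2.continuousOn hmap
    have h1 : ContinuousOn (fun p : ℝ × ℝ =>
        wdzbar f (c + p.2 * Complex.exp (p.1 * Complex.I)))
        (Set.Icc (0:ℝ) (2*π) ×ˢ Set.Icc (0:ℝ) r) :=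
      hhc.comp hcont2.continuousOn hmap
    exact h2.add h1
  have hInt : MeasureTheory.Integrable (Function.uncurry Y)
      ((volume.restrict (Set.Ioc (0:ℝ) (2*π))).prod (volume.restrict (Set.Ioc (0:ℝ) r))) := by
    rw [MeasureTheory.Measure.prod_restrict, ← MeasureTheory.Measure.volume_eq_prod]
    exact (hYcont.integrableOn_compact (isCompact_Icc.prod isCompact_Icc)).mono_set
      (Set.prod_mono Set.Ioc_subset_Icc_self Set.Ioc_subset_Icc_self)
  have hswap := MeasureTheory.integral_integral_swap hInt
  have hinner : ∀ s ∈ Set.Ioc (0:ℝ) r,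
      (∫ θ in Set.Ioc (0:ℝ) (2*π), Y θ s) = 2 * π * wdzbar f c := by
    intro s hs
    have hsubs : Metric.closedBall c s ⊆ U :=
      subset_trans (Metric.closedBall_subset_closedBall hs.2) hsub
    have hptU : ∀ θ : ℝ, c + s * Complex.exp (θ * Complex.I) ∈ U := fun θ =>
      hsub (mem_cb s θ hs.1.le hs.2)
    have i1 : IntervalIntegrable (fun θ : ℝ =>
        Complex.exp (θ * Complex.I) ^ 2
          * wdz f (c + s * Complex.exp (θ * Complex.I))) volume 0 (2*π) := by
      apply ContinuousOn.intervalIntegrable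
      exact cont_exp_sq.continuousOn.mul
        (hgc.comp (cont_circle c s).continuousOn (fun θ _ => hptU θ))
    have i2 : IntervalIntegrable (fun θ : ℝ =>
        wdzbar f (c + s * Complex.exp (θ * Complex.I))) volume 0 (2*π) := by
      apply ContinuousOn.intervalIntegrable
      exact hhc.comp (cont_circle c s).continuousOn (fun θ _ => hptU θ)
    rw [← intervalIntegral.integral_of_le h2π]
    simp only [hY]
    rw [intervalIntegral.integral_add i1 i2]
    have hv : (∫ θ in (0:ℝ)..(2*π),
        Complex.exp (θ * Complex.I) ^ 2
          * wdz f (c + s * Complex.exp (θ * Complex.I))) = 0 :=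
      cauchy_vanish hU hg hs.1 hsubs
    have hcpt : ∀ θ : ℝ,
        wdzbar f (c + s * Complex.exp (θ * Complex.I))
          = (starRingEnd ℂ) ((starRingEnd ℂ)
              (wdzbar f (c + s * Complex.exp (θ * Complex.I)))) := by
      intro θ
      rw [Complex.conj_conj]
    have hm : (∫ θ in (0:ℝ)..(2*π), wdzbar f (c + s * Complex.exp (θ * Complex.I)))
        = 2 * π * wdzbar f c := by
      rw [intervalIntegral.integral_congr (fun θ _ => hcpt θ), interval_integral_conj,
        mean_value hU hH hs.1 hsubs]
      rw [map_mul, Complex.conj_conj]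
      have h2 : (starRingEnd ℂ) (2 * (π:ℂ)) = 2 * (π:ℂ) := by
        have h3 : (2 * (π:ℂ)) = ((2*π : ℝ) : ℂ) := by push_cast; ring
        rw [h3, Complex.conj_ofReal]
      rw [h2]
    rw [hv, hm, zero_add]
  rw [hsplit, hAzero, zero_add, intervalIntegral.integral_congr hBeq]
  rw [intervalIntegral.integral_of_le h2π]
  have hio : ∀ θ : ℝ, (∫ s in (0:ℝ)..r, Y θ s) = ∫ s in Set.Ioc (0:ℝ) r, Y θ s := fun θ =>
    intervalIntegral.integral_of_le hr.le
  rw [MeasureTheory.setIntegral_congr_fun measurableSet_Ioc (fun θ _ => hio θ)]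
  rw [hswap]
  rw [MeasureTheory.setIntegral_congr_fun measurableSet_Ioc hinner]
  rw [MeasureTheory.setIntegral_const, MeasureTheory.measureReal_def, Real.volume_Ioc]
  rw [ENNReal.toReal_ofReal (by linarith : (0:ℝ) ≤ r - 0)]
  rw [Complex.real_smul]
  push_cast
  ring

end keymain2
section conv

lemma norm_exp_neg_theta (θ : ℝ) : ‖Complex.exp (-(θ * Complex.I))‖ = 1 := by
  rw [Complex.norm_exp]
  simp

lemma norm_exp_theta (θ : ℝ) : ‖Complex.exp (θ * Complex.I)‖ = 1 := by
  rw [Complex.norm_exp]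
  simp

/-- uniform convergence of wdz from the circle-integral representation -/
lemma wdz_tlu {Ω : Set ℂ} (hΩ : IsOpen Ω) {fk : ℕ → ℂ → ℂ} {f : ℂ → ℂ}
    (hsm : ∀ n, ContDiffOn ℝ 2 (fk n) Ω)
    (hharm : ∀ n, ∀ z ∈ Ω, wdzbar (fun w => wdz (fk n) w) z = 0)
    (hconv : TendstoLocallyUniformlyOn fk f atTop Ω)
    (hfsm : ContDiffOn ℝ 2 f Ω)
    (hfharm : ∀ z ∈ Ω, wdzbar (fun w => wdz f w) z = 0) :
    TendstoLocallyUniformlyOn (fun n z => wdz (fk n) z) (fun z => wdz f z) atTop Ω := by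
  rw [tendstoLocallyUniformlyOn_iff_forall_isCompact hΩ]
  intro K hKΩ hK
  obtain ⟨δ, hδ, hδΩ⟩ := hK.exists_cthickening_subset_open hΩ hKΩ
  have hK' : IsCompact (Metric.cthickening δ K) := hK.cthickening
  have huk : TendstoUniformlyOn fk f atTop (Metric.cthickening δ K) :=
    (tendstoLocallyUniformlyOn_iff_forall_isCompact hΩ).1 hconv _ hδΩ hK'
  rw [Metric.tendstoUniformlyOn_iff] at huk ⊢
  intro ε hε
  have hπ := Real.pi_pos
  have hpos : 0 < ε * δ / 2 := by positivity
  filter_upwards [huk (ε * δ / 2) hpos] with n hn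
  intro c hc
  have hsubK : Metric.closedBall c δ ⊆ Metric.cthickening δ K :=
    Metric.closedBall_subset_cthickening hc δ
  have hsubΩ : Metric.closedBall c δ ⊆ Ω := hsubK.trans hδΩ
  have h1 := key1 hΩ (hsm n) (hharm n) hδ hsubΩ
  have h2 := key1 hΩ hfsm hfharm hδ hsubΩ
  have hif : IntervalIntegrable (fun θ : ℝ =>
      Complex.exp (-(θ * Complex.I)) * f (c + δ * Complex.exp (θ * Complex.I)))
      volume 0 (2*π) := by
    apply ContinuousOn.intervalIntegrable
    exact cont_exp_neg_theta.continuousOn.mul (hfsm.continuousOn.comp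
      (cont_circle c δ).continuousOn (fun θ _ => hsubΩ (mem_cb δ θ hδ.le le_rfl)))
  have hifk : IntervalIntegrable (fun θ : ℝ =>
      Complex.exp (-(θ * Complex.I)) * fk n (c + δ * Complex.exp (θ * Complex.I)))
      volume 0 (2*π) := by
    apply ContinuousOn.intervalIntegrable
    exact cont_exp_neg_theta.continuousOn.mul ((hsm n).continuousOn.comp
      (cont_circle c δ).continuousOn (fun θ _ => hsubΩ (mem_cb δ θ hδ.le le_rfl)))
  set D : ℂ := ∫ θ in (0:ℝ)..(2*π), Complex.exp (-(θ * Complex.I)) *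
      (f (c + δ * Complex.exp (θ * Complex.I)) - fk n (c + δ * Complex.exp (θ * Complex.I)))
    with hDdef
  have hD : D = ((2 * π * δ : ℝ) : ℂ) * (wdz f c - wdz (fk n) c) := by
    have hsub' : D = (∫ θ in (0:ℝ)..(2*π), Complex.exp (-(θ * Complex.I)) *
          f (c + δ * Complex.exp (θ * Complex.I)))
        - ∫ θ in (0:ℝ)..(2*π), Complex.exp (-(θ * Complex.I)) *
          fk n (c + δ * Complex.exp (θ * Complex.I)) := by
      rw [hDdef, ← intervalIntegral.integral_sub hif hifk]
      apply intervalIntegral.integral_congr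
      intro θ _
      ring
    rw [hsub', h1, h2]
    push_cast
    ring
  have hDnorm : ‖D‖ ≤ ε * δ / 2 * (2 * π) := by
    have hb := intervalIntegral.norm_integral_le_of_norm_le_const (C := ε * δ / 2)
      (f := fun θ : ℝ => Complex.exp (-(θ * Complex.I)) *
        (f (c + δ * Complex.exp (θ * Complex.I)) - fk n (c + δ * Complex.exp (θ * Complex.I))))
      (a := 0) (b := 2*π) ?_
    · calc ‖D‖ ≤ ε * δ / 2 * |2*π - 0| := hb
        _ = ε * δ / 2 * (2 * π) := by rw [sub_zero, abs_of_pos (by positivity)]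
    · intro θ _
      rw [norm_mul, norm_exp_neg_theta, one_mul, ← dist_eq_norm]
      exact (hn (c + δ * Complex.exp (θ * Complex.I))
        (hsubK (mem_cb δ θ hδ.le le_rfl))).le
  rw [dist_eq_norm]
  have hnormD : ‖D‖ = 2 * π * δ * ‖wdz f c - wdz (fk n) c‖ := by
    rw [hD, norm_mul, Complex.norm_real, Real.norm_eq_abs, abs_of_pos (by positivity)]
  have hfinal : ‖wdz f c - wdz (fk n) c‖ ≤ ε / 2 := by
    rw [hnormD] at hDnorm
    have h2πδ : 0 < 2 * π * δ := by positivity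
    calc ‖wdz f c - wdz (fk n) c‖
        = (2 * π * δ * ‖wdz f c - wdz (fk n) c‖) / (2 * π * δ) := by
          field_simp
      _ ≤ (ε * δ / 2 * (2 * π)) / (2 * π * δ) := (div_le_div_iff_of_pos_right h2πδ).mpr hDnorm
      _ = ε / 2 := by field_simp
  linarith

/-- pointwise convergence of wdzbar -/
lemma wdzbar_tendsto {Ω : Set ℂ} (hΩ : IsOpen Ω) {fk : ℕ → ℂ → ℂ} {f : ℂ → ℂ}
    (hsm : ∀ n, ContDiffOn ℝ 2 (fk n) Ω)
    (hharm : ∀ n, ∀ z ∈ Ω, wdzbar (fun w => wdz (fk n) w) z = 0)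
    (hconv : TendstoLocallyUniformlyOn fk f atTop Ω)
    (hfsm : ContDiffOn ℝ 2 f Ω)
    (hfharm : ∀ z ∈ Ω, wdzbar (fun w => wdz f w) z = 0)
    {c : ℂ} (hc : c ∈ Ω) :
    Tendsto (fun n => wdzbar (fk n) c) atTop (𝓝 (wdzbar f c)) := by
  obtain ⟨ρ, hρ, hρΩ⟩ := Metric.isOpen_iff.1 hΩ c hc
  set δ := ρ / 2 with hδdef
  have hδ : 0 < δ := by positivity
  have hsubΩ : Metric.closedBall c δ ⊆ Ω := by
    refine subset_trans ?_ hρΩ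
    refine subset_trans (Metric.closedBall_subset_ball ?_) (subset_refl _)
    rw [hδdef]; linarith
  have hK' : IsCompact (Metric.closedBall c δ) := isCompact_closedBall c δ
  have huk : TendstoUniformlyOn fk f atTop (Metric.closedBall c δ) :=
    (tendstoLocallyUniformlyOn_iff_forall_isCompact hΩ).1 hconv _ hsubΩ hK'
  rw [Metric.tendsto_atTop]
  intro ε hε
  have hπ := Real.pi_pos
  have hpos : 0 < ε * δ / 2 := by positivity
  rw [Metric.tendstoUniformlyOn_iff] at huk
  obtain ⟨N, hN⟩ := (huk (ε * δ / 2) hpos).exists_forall_of_atTop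
  refine ⟨N, fun n hn => ?_⟩
  have hn' := hN n hn
  have h1 := key2 hΩ (hsm n) (hharm n) hδ hsubΩ
  have h2 := key2 hΩ hfsm hfharm hδ hsubΩ
  have hif : IntervalIntegrable (fun θ : ℝ =>
      Complex.exp (θ * Complex.I) * f (c + δ * Complex.exp (θ * Complex.I)))
      volume 0 (2*π) := by
    apply ContinuousOn.intervalIntegrable
    exact cont_exp_theta.continuousOn.mul (hfsm.continuousOn.comp
      (cont_circle c δ).continuousOn (fun θ _ => hsubΩ (mem_cb δ θ hδ.le le_rfl)))
  have hifk : IntervalIntegrable (fun θ : ℝ =>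
      Complex.exp (θ * Complex.I) * fk n (c + δ * Complex.exp (θ * Complex.I)))
      volume 0 (2*π) := by
    apply ContinuousOn.intervalIntegrable
    exact cont_exp_theta.continuousOn.mul ((hsm n).continuousOn.comp
      (cont_circle c δ).continuousOn (fun θ _ => hsubΩ (mem_cb δ θ hδ.le le_rfl)))
  set D : ℂ := ∫ θ in (0:ℝ)..(2*π), Complex.exp (θ * Complex.I) *
      (f (c + δ * Complex.exp (θ * Complex.I)) - fk n (c + δ * Complex.exp (θ * Complex.I)))
    with hDdef
  have hD : D = ((2 * π * δ : ℝ) : ℂ) * (wdzbar f c - wdzbar (fk n) c) := by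
    have hsub' : D = (∫ θ in (0:ℝ)..(2*π), Complex.exp (θ * Complex.I) *
          f (c + δ * Complex.exp (θ * Complex.I)))
        - ∫ θ in (0:ℝ)..(2*π), Complex.exp (θ * Complex.I) *
          fk n (c + δ * Complex.exp (θ * Complex.I)) := by
      rw [hDdef, ← intervalIntegral.integral_sub hif hifk]
      apply intervalIntegral.integral_congr
      intro θ _
      ring
    rw [hsub', h1, h2]
    push_cast
    ring
  have hDnorm : ‖D‖ ≤ ε * δ / 2 * (2 * π) := by
    have hb := intervalIntegral.norm_integral_le_of_norm_le_const (C := ε * δ / 2)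
      (f := fun θ : ℝ => Complex.exp (θ * Complex.I) *
        (f (c + δ * Complex.exp (θ * Complex.I)) - fk n (c + δ * Complex.exp (θ * Complex.I))))
      (a := 0) (b := 2*π) ?_
    · calc ‖D‖ ≤ ε * δ / 2 * |2*π - 0| := hb
        _ = ε * δ / 2 * (2 * π) := by rw [sub_zero, abs_of_pos (by positivity)]
    · intro θ _
      rw [norm_mul, norm_exp_theta, one_mul, ← dist_eq_norm]
      exact (hn' (c + δ * Complex.exp (θ * Complex.I))
        (mem_cb δ θ hδ.le le_rfl)).le
  rw [dist_eq_norm]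
  have hnormD : ‖D‖ = 2 * π * δ * ‖wdzbar f c - wdzbar (fk n) c‖ := by
    rw [hD, norm_mul, Complex.norm_real, Real.norm_eq_abs, abs_of_pos (by positivity)]
  have hfinal : ‖wdzbar f c - wdzbar (fk n) c‖ ≤ ε / 2 := by
    rw [hnormD] at hDnorm
    have h2πδ : 0 < 2 * π * δ := by positivity
    calc ‖wdzbar f c - wdzbar (fk n) c‖
        = (2 * π * δ * ‖wdzbar f c - wdzbar (fk n) c‖) / (2 * π * δ) := by
          field_simp
      _ ≤ (ε * δ / 2 * (2 * π)) / (2 * π * δ) := (div_le_div_iff_of_pos_right h2πδ).mpr hDnorm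
      _ = ε / 2 := by field_simp
  have : ‖wdzbar (fk n) c - wdzbar f c‖ = ‖wdzbar f c - wdzbar (fk n) c‖ := by
    rw [norm_sub_rev]
  rw [this]
  linarith

end conv

/-- Harmonic Hurwitz lemma: locally uniform limits of injective harmonic maps with positive
Jacobian have converging derivatives and satisfy the dichotomy J > 0 everywhere or J ≡ 0. -/
theorem stmt18 (Ω : Set ℂ) (hΩ : IsOpen Ω) (hΩc : IsConnected Ω)
    (fk : ℕ → ℂ → ℂ) (f : ℂ → ℂ)
    (hsm : ∀ n, ContDiffOn ℝ 2 (fk n) Ω)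
    (hharm : ∀ n, ∀ z ∈ Ω, wdzbar (fun w => wdz (fk n) w) z = 0)
    (hinj : ∀ n, Set.InjOn (fk n) Ω)
    (hJk : ∀ n, ∀ z ∈ Ω, 0 < jac (fk n) z)
    (hconv : TendstoLocallyUniformlyOn fk f atTop Ω)
    (hfsm : ContDiffOn ℝ 2 f Ω)
    (hfharm : ∀ z ∈ Ω, wdzbar (fun w => wdz f w) z = 0) :
    TendstoLocallyUniformlyOn (fun n z => wdz (fk n) z) (fun z => wdz f z) atTop Ω ∧
    ((∀ z ∈ Ω, 0 < jac f z) ∨ (∀ z ∈ Ω, jac f z = 0)) := by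
  have hTLU := wdz_tlu hΩ hsm hharm hconv hfsm hfharm
  refine ⟨hTLU, ?_⟩
  have hgn_tendsto : ∀ z ∈ Ω, Tendsto (fun n => wdz (fk n) z) atTop (𝓝 (wdz f z)) :=
    fun z hz => hTLU.tendsto_at hz
  have hhn_tendsto : ∀ z ∈ Ω, Tendsto (fun n => wdzbar (fk n) z) atTop (𝓝 (wdzbar f z)) :=
    fun z hz => wdzbar_tendsto hΩ hsm hharm hconv hfsm hfharm hz
  have hlt : ∀ n, ∀ z ∈ Ω, ‖wdzbar (fk n) z‖ < ‖wdz (fk n) z‖ := by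
    intro n z hz
    have hJ := hJk n z hz
    rw [jac] at hJ
    nlinarith [norm_nonneg (wdzbar (fk n) z), norm_nonneg (wdz (fk n) z)]
  have hle : ∀ z ∈ Ω, ‖wdzbar f z‖ ≤ ‖wdz f z‖ := by
    intro z hz
    exact le_of_tendsto_of_tendsto' (hhn_tendsto z hz).norm (hgn_tendsto z hz).norm
      (fun n => (hlt n z hz).le)
  have hg_holo : DifferentiableOn ℂ (wdz f) Ω := wdz_holo hΩ hfsm hfharm
  have hH_holo : DifferentiableOn ℂ (fun z => (starRingEnd ℂ) (wdzbar f z)) Ω :=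
    wdzbar_conj_holo hΩ hfsm hfharm
  by_cases hg0 : ∀ z ∈ Ω, wdz f z = 0
  · right
    intro z hz
    have h1 := hle z hz
    rw [hg0 z hz, norm_zero] at h1
    have h2 : wdzbar f z = 0 := norm_le_zero_iff.1 h1
    rw [jac, hg0 z hz, h2, norm_zero]
    ring
  · -- Hurwitz: the limit derivative never vanishes
    have hg_ne : ∀ z ∈ Ω, wdz f z ≠ 0 := by
      intro z₀ hz₀ hzero
      have han : AnalyticOnNhd ℂ (wdz f) Ω := hg_holo.analyticOnNhd hΩ
      rcases (han z₀ hz₀).eventually_eq_zero_or_eventually_ne_zero with hev | hev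
      · exact hg0 (fun z hz =>
          han.eqOn_zero_of_preconnected_of_eventuallyEq_zero hΩc.isPreconnected hz₀ hev hz)
      · -- choose a circle avoiding zeros
        rw [eventually_nhdsWithin_iff] at hev
        rw [Metric.eventually_nhds_iff] at hev
        obtain ⟨ε1, hε1, hball⟩ := hev
        obtain ⟨ε2, hε2, hball2⟩ := Metric.isOpen_iff.1 hΩ z₀ hz₀
        set ρ := min ε1 ε2 / 2 with hρdef
        have hρ : 0 < ρ := by positivity
        have hρ1 : ρ < ε1 := by
          have := min_le_left ε1 ε2
          rw [hρdef]; by_cases h : ε1 ≤ ε2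
          · rw [min_eq_left h]; linarith
          · push_neg at h; rw [min_eq_right h.le]; linarith
        have hρ2 : ρ < ε2 := by
          rw [hρdef]; by_cases h : ε1 ≤ ε2
          · rw [min_eq_left h]; linarith
          · push_neg at h; rw [min_eq_right h.le]; linarith
        have hρΩ : Metric.closedBall z₀ ρ ⊆ Ω :=
          (Metric.closedBall_subset_ball hρ2).trans hball2
        have hρne : ∀ w ∈ Metric.sphere z₀ ρ, wdz f w ≠ 0 := by
          intro w hw
          rw [Metric.mem_sphere] at hw
          apply hball (by rw [hw]; exact hρ1)
          intro hwz
          rw [Set.mem_singleton_iff] at hwz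
          rw [hwz, dist_self] at hw
          exact hρ.ne' hw.symm
        have hsph : (Metric.sphere z₀ ρ).Nonempty := NormedSpace.sphere_nonempty.2 hρ.le
        have hsphΩ : Metric.sphere z₀ ρ ⊆ Ω :=
          Metric.sphere_subset_closedBall.trans hρΩ
        have hcont : ContinuousOn (fun w => ‖wdz f w‖) (Metric.sphere z₀ ρ) :=
          ((wdz_contDiffOn hΩ hfsm).continuousOn.mono hsphΩ).norm
        obtain ⟨w₀, hw₀, hmin⟩ := (isCompact_sphere z₀ ρ).exists_isMinOn hsph hcont
        set m := ‖wdz f w₀‖ with hmdef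
        have hm : 0 < m := by
          rw [hmdef, norm_pos_iff]
          exact hρne w₀ hw₀
        have hsu : TendstoUniformlyOn (fun n z => wdz (fk n) z) (wdz f) atTop
            (Metric.sphere z₀ ρ) :=
          (tendstoLocallyUniformlyOn_iff_forall_isCompact hΩ).1 hTLU _ hsphΩ
            (isCompact_sphere z₀ ρ)
        rw [Metric.tendstoUniformlyOn_iff] at hsu
        obtain ⟨N2, hN2⟩ := (hsu (m/3) (by positivity)).exists_forall_of_atTop
        have h3 : Tendsto (fun n => wdz (fk n) z₀) atTop (𝓝 0) := by
          have := hgn_tendsto z₀ hz₀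
          rwa [hzero] at this
        obtain ⟨N1, hN1⟩ := Metric.tendsto_atTop.1 h3 (m/3) (by positivity)
        set n := max N1 N2 with hndef
        have hz₀small : ‖wdz (fk n) z₀‖ < m/3 := by
          have := hN1 n (le_max_left _ _)
          rwa [dist_zero_right] at this
        have hlb : ∀ w ∈ Metric.sphere z₀ ρ, 2*m/3 ≤ ‖wdz (fk n) w‖ := by
          intro w hw
          have h4 := hN2 n (le_max_right _ _) w hw
          have h5 : m ≤ ‖wdz f w‖ := hmin hw
          have h6 : ‖wdz f w - wdz (fk n) w‖ < m/3 := by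
            rw [← dist_eq_norm]
            exact h4
          have h7 := norm_sub_norm_le (wdz f w) (wdz (fk n) w)
          linarith
        have hgn_ne : ∀ z ∈ Ω, wdz (fk n) z ≠ 0 := by
          intro z hz
          have := hlt n z hz
          intro hzero'
          rw [hzero', norm_zero] at this
          exact absurd this (not_lt.2 (norm_nonneg _))
        have hφd : DifferentiableOn ℂ (fun z => (wdz (fk n) z)⁻¹) Ω :=
          (wdz_holo hΩ (hsm n) (hharm n)).inv hgn_ne
        have hφball : DiffContOnCl ℂ (fun z => (wdz (fk n) z)⁻¹) (Metric.ball z₀ ρ) := by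
          constructor
          · exact hφd.mono (Metric.ball_subset_closedBall.trans hρΩ)
          · rw [closure_ball z₀ hρ.ne']
            exact hφd.continuousOn.mono hρΩ
        have hmax := Complex.norm_le_of_forall_mem_frontier_norm_le Metric.isBounded_ball
          hφball (C := (2*m/3)⁻¹) ?_ (z := z₀) ?_
        · rw [norm_inv] at hmax
          have h8 : 2*m/3 ≤ ‖wdz (fk n) z₀‖ := by
            have h9 : 0 < ‖wdz (fk n) z₀‖ := norm_pos_iff.2 (hgn_ne z₀ hz₀)
            have := (inv_le_inv₀ h9 (by positivity)).1 hmax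
            linarith
          linarith
        · intro w hw
          rw [frontier_ball z₀ hρ.ne'] at hw
          rw [norm_inv]
          have h9 : 0 < ‖wdz (fk n) w‖ := norm_pos_iff.2 (hgn_ne w (hsphΩ hw))
          exact inv_anti₀ (by positivity) (hlb w hw)
        · rw [closure_ball z₀ hρ.ne']
          exact Metric.mem_closedBall_self hρ.le
    -- the second dilatation argument
    by_cases hJ : ∀ z ∈ Ω, 0 < jac f z
    · left; exact hJ
    · right
      push_neg at hJ
      obtain ⟨z₀, hz₀, hJz₀⟩ := hJ
      set ω := fun z => (starRingEnd ℂ) (wdzbar f z) / wdz f z with hωdef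
      have hω_holo : DifferentiableOn ℂ ω Ω := hH_holo.div hg_holo hg_ne
      have hωnorm : ∀ z ∈ Ω, ‖ω z‖ = ‖wdzbar f z‖ / ‖wdz f z‖ := by
        intro z hz
        rw [hωdef]
        simp only [norm_div, RCLike.norm_conj]
      have hωle : ∀ z ∈ Ω, ‖ω z‖ ≤ 1 := by
        intro z hz
        rw [hωnorm z hz]
        rw [div_le_one (norm_pos_iff.2 (hg_ne z hz))]
        exact hle z hz
      have hz₀eq : ‖ω z₀‖ = 1 := by
        have h1 : ‖wdz f z₀‖ ≤ ‖wdzbar f z₀‖ := by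
          rw [jac] at hJz₀
          nlinarith [norm_nonneg (wdz f z₀), norm_nonneg (wdzbar f z₀)]
        have h2 : ‖wdzbar f z₀‖ = ‖wdz f z₀‖ := le_antisymm (hle z₀ hz₀) h1
        rw [hωnorm z₀ hz₀, h2]
        exact div_self (norm_pos_iff.2 (hg_ne z₀ hz₀)).ne'
      have hmaxon : IsMaxOn (norm ∘ ω) Ω z₀ := by
        intro z hz
        simp only [Function.comp_apply, Set.mem_setOf_eq]
        rw [hz₀eq]
        exact hωle z hz
      have heq := Complex.norm_eqOn_of_isPreconnected_of_isMaxOn hΩc.isPreconnected hΩ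
        hω_holo hz₀ hmaxon
      intro z hz
      have h1 : ‖ω z‖ = 1 := by
        have := heq hz
        simp only [Function.comp_apply, Function.const_apply] at this
        rw [this, hz₀eq]
      rw [hωnorm z hz, div_eq_one_iff_eq (norm_pos_iff.2 (hg_ne z hz)).ne'] at h1
      rw [jac, h1]
      ring
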